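/- Let T₁ and T₂ be two spanning trees of a finite connected graph G such that the edge set of T₂ contains exactly k edges not in T₁. Then diam(T₂)/(k+1) − 1 ≤ diam(T₁) ≤ (k+1)·diam(T₂) + k, where diam denotes the graph diameter (maximal graph distance between vertices) of the tree. -/

import Mathlib

open SimpleGraph

namespace Stmt4Aux

variable {V : Type*}

lemma ediam_ne_top_of_connected [Fintype V] {T : SimpleGraph V} (hc : T.Connected) :
    T.ediam ≠ ⊤ := by
  have : Nonempty V := hc.nonempty
  obtain ⟨u, v, h⟩ := SimpleGraph.exists_edist_eq_ediam_of_finite (G := T)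
  rw [← h]
  exact (SimpleGraph.edist_ne_top_iff_reachable).2 (hc u v)

lemma path_length_le_diam [Fintype V] {T : SimpleGraph V} (hT : T.IsTree) {u v : V}
    (p : T.Walk u v) (hp : p.IsPath) : p.length ≤ T.diam := by
  classical
  obtain ⟨q, hq⟩ := hT.isConnected.exists_walk_length_eq_dist u v
  have huniq : (⟨p, hp⟩ : T.Path u v) = ⟨q.bypass, q.bypass_isPath⟩ :=
    hT.IsAcyclic.path_unique _ _
  have hlen : p.length = q.bypass.length := by
    have := congrArg (fun r : T.Path u v => (r : T.Walk u v).length) huniq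
    simpa using this
  calc p.length = q.bypass.length := hlen
    _ ≤ q.length := q.length_bypass_le
    _ = T.dist u v := hq
    _ ≤ T.diam := SimpleGraph.dist_le_diam (ediam_ne_top_of_connected hT.isConnected)

variable {T₁ T₂ : SimpleGraph V} [DecidablePred (· ∈ T₂.edgeSet)]

/-- the prefix of a `T₁`-walk consisting of `T₂`-edges yields a `T₂`-walk -/
lemma prefix_walk : ∀ {u v : V} (w : T₁.Walk u v),
    ∃ (x : V) (q : T₂.Walk u x), q.support <+: w.support ∧
      q.length = (w.edges.takeWhile (fun e => decide (e ∈ T₂.edgeSet))).length := by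
  intro u v w
  induction w with
  | nil => exact ⟨_, Walk.nil, ⟨[], rfl⟩, by simp⟩
  | @cons a b c h w' ih =>
    by_cases he : s(a, b) ∈ T₂.edgeSet
    · obtain ⟨x, q', hpre, hlen⟩ := ih
      refine ⟨x, Walk.cons ((SimpleGraph.mem_edgeSet T₂).mp he) q', ?_, ?_⟩
      · obtain ⟨t, ht⟩ := hpre
        exact ⟨t, by simp [← ht]⟩
      · simp [hlen, he]
    · exact ⟨a, Walk.nil, ⟨w'.support, by simp⟩, by simp [he]⟩

lemma takeWhile_le_diam [Fintype V] (ht2 : T₂.IsTree) {u v : V} (w : T₁.Walk u v)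
    (hw : w.IsPath) :
    (w.edges.takeWhile (fun e => decide (e ∈ T₂.edgeSet))).length ≤ T₂.diam := by
  obtain ⟨x, q, hpre, hlen⟩ := prefix_walk (T₂ := T₂) w
  rw [← hlen]
  refine path_length_le_diam ht2 q ?_
  rw [Walk.isPath_def]
  exact (hpre.sublist.nodup hw.support_nodup)

lemma main_bound [Fintype V] (ht2 : T₂.IsTree) : ∀ {u v : V} (w : T₁.Walk u v), w.IsPath →
    w.length ≤ (w.edges.filter (fun e => decide (e ∉ T₂.edgeSet))).length * (T₂.diam + 1)
      + (w.edges.takeWhile (fun e => decide (e ∈ T₂.edgeSet))).length := by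
  intro u v w
  induction w with
  | nil => simp
  | @cons a b c h w' ih =>
    intro hp
    have hp' : w'.IsPath := hp.of_cons
    have ih' := ih hp'
    by_cases he : s(a, b) ∈ T₂.edgeSet
    · have ht : (s(a, b) :: w'.edges).takeWhile (fun e => decide (e ∈ T₂.edgeSet))
          = s(a, b) :: w'.edges.takeWhile (fun e => decide (e ∈ T₂.edgeSet)) := by
        simp [List.takeWhile_cons, he]
      have hf : (s(a, b) :: w'.edges).filter (fun e => decide (e ∉ T₂.edgeSet))
          = w'.edges.filter (fun e => decide (e ∉ T₂.edgeSet)) := by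
        simp [List.filter_cons, he]
      simp only [Walk.length_cons, Walk.edges_cons, ht, hf, List.length_cons]
      omega
    · have hgp := takeWhile_le_diam (T₂ := T₂) ht2 w' hp'
      have ht : (s(a, b) :: w'.edges).takeWhile (fun e => decide (e ∈ T₂.edgeSet))
          = [] := by
        simp [List.takeWhile_cons, he]
      have hf : (s(a, b) :: w'.edges).filter (fun e => decide (e ∉ T₂.edgeSet))
          = s(a, b) :: w'.edges.filter (fun e => decide (e ∉ T₂.edgeSet)) := by
        simp [List.filter_cons, he]
      simp only [Walk.length_cons, Walk.edges_cons, ht, hf, List.length_cons]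
      have hmul : ((w'.edges.filter (fun e => decide (e ∉ T₂.edgeSet))).length + 1)
          * (T₂.diam + 1)
          = (w'.edges.filter (fun e => decide (e ∉ T₂.edgeSet))).length * (T₂.diam + 1)
            + (T₂.diam + 1) := by ring
      omega

end Stmt4Aux

open Stmt4Aux in
lemma Stmt4Aux.diam_le [Fintype V] {T₁ T₂ : SimpleGraph V}
    (ht1 : T₁.IsTree) (ht2 : T₂.IsTree) (k : ℕ)
    (hk : (T₁.edgeSet \ T₂.edgeSet).ncard = k) :
    T₁.diam ≤ (k + 1) * T₂.diam + k := by
  classical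
  rcases isEmpty_or_nonempty V with hV | hV
  · have : T₁.diam = 0 := SimpleGraph.diam_eq_zero.mpr (Or.inr inferInstance)
    omega
  obtain ⟨u, v, huv⟩ := SimpleGraph.exists_dist_eq_diam (G := T₁)
  rw [← huv]
  obtain ⟨p0, _⟩ := ht1.isConnected.exists_walk_length_eq_dist u v
  set p := p0.bypass with hpdef
  have hp : p.IsPath := p0.bypass_isPath
  have h1 : T₁.dist u v ≤ p.length := SimpleGraph.dist_le p
  have h2 := main_bound (T₁ := T₁) (T₂ := T₂) ht2 p hp
  -- bound the number of bad edges by k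
  set l := p.edges.filter (fun e => decide (e ∉ T₂.edgeSet)) with hl
  have hnodup : l.Nodup := hp.isTrail.edges_nodup.filter _
  have hsub : ∀ e ∈ l, e ∈ T₁.edgeSet \ T₂.edgeSet := by
    intro e hel
    rw [hl, List.mem_filter] at hel
    refine ⟨p.edges_subset_edgeSet hel.1, by simpa using hel.2⟩
  have hcard : l.length ≤ k := by
    have h3 : l.length = l.toFinset.card := (List.toFinset_card_of_nodup hnodup).symm
    have h4 : (l.toFinset : Set (Sym2 V)) ⊆ T₁.edgeSet \ T₂.edgeSet := by
      intro e hel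
      exact hsub e (by simpa using hel)
    calc l.length = (l.toFinset : Set (Sym2 V)).ncard := by
            rw [h3, Set.ncard_coe_finset]
      _ ≤ (T₁.edgeSet \ T₂.edgeSet).ncard := Set.ncard_le_ncard h4 (Set.toFinite _)
      _ = k := hk
  have hgp := takeWhile_le_diam (T₂ := T₂) ht2 p hp
  have : p.length ≤ k * (T₂.diam + 1) + T₂.diam := by
    calc p.length ≤ l.length * (T₂.diam + 1)
          + (p.edges.takeWhile (fun e => decide (e ∈ T₂.edgeSet))).length := h2
      _ ≤ k * (T₂.diam + 1) + T₂.diam := by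
          have := Nat.mul_le_mul_right (T₂.diam + 1) hcard
          omega
  calc T₁.dist u v ≤ p.length := h1
    _ ≤ k * (T₂.diam + 1) + T₂.diam := this
    _ = (k + 1) * T₂.diam + k := by ring

/-- If `T₁`, `T₂` are spanning trees of a finite connected graph `G` with exactly `k`
edges of `T₂` not in `T₁`, then `diam(T₂)/(k+1) - 1 ≤ diam(T₁) ≤ (k+1) diam(T₂) + k`. -/
theorem stmt_4 {V : Type*} [Fintype V] (G T₁ T₂ : SimpleGraph V)
    (hG : G.Connected) (h1 : T₁ ≤ G) (h2 : T₂ ≤ G)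
    (ht1 : T₁.IsTree) (ht2 : T₂.IsTree) (k : ℕ)
    (hk : (T₂.edgeSet \ T₁.edgeSet).ncard = k) :
    (T₂.diam : ℝ)/(k+1) - 1 ≤ (T₁.diam : ℝ) ∧
      (T₁.diam : ℝ) ≤ (k+1) * (T₂.diam : ℝ) + k := by
  classical
  -- the two difference sets have the same cardinality
  have hcards : T₁.edgeFinset.card = T₂.edgeFinset.card := by
    have c1 := ht1.card_edgeFinset
    have c2 := ht2.card_edgeFinset
    omega
  have hdiff : (T₁.edgeSet \ T₂.edgeSet).ncard = k := by
    have e1 : (T₁.edgeSet \ T₂.edgeSet).ncard = (T₁.edgeFinset \ T₂.edgeFinset).card := by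
      rw [SimpleGraph.edgeFinset, SimpleGraph.edgeFinset, ← Set.toFinset_diff, Set.ncard_eq_toFinset_card']
    have e2 : (T₂.edgeSet \ T₁.edgeSet).ncard = (T₂.edgeFinset \ T₁.edgeFinset).card := by
      rw [SimpleGraph.edgeFinset, SimpleGraph.edgeFinset, ← Set.toFinset_diff, Set.ncard_eq_toFinset_card']
    have c1 := Finset.card_sdiff_add_card_inter T₁.edgeFinset T₂.edgeFinset
    have c2 := Finset.card_sdiff_add_card_inter T₂.edgeFinset T₁.edgeFinset
    rw [Finset.inter_comm] at c2
    rw [e2] at hk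
    omega
  have nat1 : T₁.diam ≤ (k + 1) * T₂.diam + k := Stmt4Aux.diam_le ht1 ht2 k hdiff
  have nat2 : T₂.diam ≤ (k + 1) * T₁.diam + k := Stmt4Aux.diam_le ht2 ht1 k hk
  constructor
  · have hkpos : (0 : ℝ) < (k : ℝ) + 1 := by positivity
    rw [div_sub_one (ne_of_gt hkpos), div_le_iff₀ hkpos]
    have : (T₂.diam : ℝ) ≤ (k + 1) * T₁.diam + k := by exact_mod_cast nat2
    nlinarith [this]
  · have : (T₁.diam : ℝ) ≤ ((k + 1) * T₂.diam + k : ℕ) := by exact_mod_cast nat1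
    push_cast at this
    linarith
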